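/- Normal-form preservation of the read-back rewriting system: for every normal context C[·] and lambda terms M, N, if ⟨C[·], M•⟩ →* ⌈N⌉ (the reduction sequence in Λ^rb starting from ⟨C[·], M•⟩ terminates in the atom ⌈N⌉), then N is in β-normal form. -/

import Mathlib

/-- Lambda terms, extended with "atoms" `⌈M⌉` that wrap a term. -/
inductive Tm : Type
  | var : String → Tm
  | app : Tm → Tm → Tm
  | lam : String → Tm → Tm
  | atom : Tm → Tm
deriving DecidableEq

namespace Tm

/-- A pure lambda term (an element of Λ): contains no atoms. -/
def Pure : Tm → Prop
  | var _ => True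
  | app a b => Pure a ∧ Pure b
  | lam _ m => Pure m
  | atom _ => False

/-- Free variables; atoms have no free variables. -/
def FV : Tm → Finset String
  | var x => {x}
  | app a b => FV a ∪ FV b
  | lam x m => FV m \ {x}
  | atom _ => ∅

/-- Substitution; atoms are unaffected. -/
def subst : Tm → String → Tm → Tm
  | var y, x, N => if y = x then N else var y
  | app a b, x, N => app (a.subst x N) (b.subst x N)
  | lam y m, x, N => if y = x then lam y m else lam y (m.subst x N)
  | atom m, _, _ => atom m

/-- `apps M [N₁,…,Nₙ] = M N₁ ⋯ Nₙ`. -/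
def apps (M : Tm) (Ns : List Tm) : Tm := Ns.foldl app M

/-- Replace each free variable `x` (not in the bound list) by the atom `⌈x⌉`. -/
def bulletAux : List String → Tm → Tm
  | bs, var x => if x ∈ bs then var x else atom (var x)
  | bs, app a b => app (bulletAux bs a) (bulletAux bs b)
  | bs, lam x m => lam x (bulletAux (x :: bs) m)
  | _, atom m => atom m

/-- `M•`: replace each free variable `x` of `M` by the atom `⌈x⌉`. -/
def bullet (M : Tm) : Tm := bulletAux [] M

/-- Read-back `RB : Λ• → Λ`: `RB (M N) = RB M (RB N)`,
`RB (λx.M) = λx.RB (M[x:=⌈x⌉])`, `RB ⌈M⌉ = M` (stated structurally,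
which agrees with the above since `RB (M[x:=⌈x⌉]) = RB M` here). -/
def RB : Tm → Tm
  | var x => var x
  | app a b => app (RB a) (RB b)
  | lam x m => lam x (RB m)
  | atom m => m

end Tm

/-- Membership in Λ• = { M• | M ∈ Λ }. -/
def IsBullet (M : Tm) : Prop := ∃ P : Tm, P.Pure ∧ M = P.bullet

/-- One-step β-reduction (atoms are inert). -/
inductive Beta : Tm → Tm → Prop
  | beta (x M N) : Beta (.app (.lam x M) N) (M.subst x N)
  | appL {M M'} (N) : Beta M M' → Beta (.app M N) (.app M' N)
  | appR (M) {N N'} : Beta N N' → Beta (.app M N) (.app M N')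
  | lam (x) {M M'} : Beta M M' → Beta (.lam x M) (.lam x M')

/-- β-normal form. -/
def NF (M : Tm) : Prop := ∀ N, ¬ Beta M N

/-- One-hole contexts. -/
inductive Ctx : Type
  | hole
  | appL : Ctx → Tm → Ctx
  | appR : Tm → Ctx → Ctx
  | lam : String → Ctx → Ctx

namespace Ctx

/-- `C[M]`: fill the hole of `C` with `M`. -/
def fill : Ctx → Tm → Tm
  | hole, M => M
  | appL C N, M => .app (C.fill M) N
  | appR N C, M => .app N (C.fill M)
  | lam x C, M => .lam x (C.fill M)

/-- Composition of contexts: `(C.comp D)[M] = C[D[M]]`. -/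
def comp : Ctx → Ctx → Ctx
  | hole, D => D
  | appL C N, D => appL (C.comp D) N
  | appR N C, D => appR N (C.comp D)
  | lam x C, D => lam x (C.comp D)

/-- A context over pure lambda terms. -/
def Pure : Ctx → Prop
  | hole => True
  | appL C N => C.Pure ∧ N.Pure
  | appR N C => N.Pure ∧ C.Pure
  | lam _ C => C.Pure

end Ctx

/-- A context is normal iff it maps β-normal forms to β-normal forms. -/
def NormalCtx (C : Ctx) : Prop := ∀ M, NF M → NF (C.fill M)

/-- The set Λ^rb: atoms `⌈M⌉`; pairs `⟨C[·], M⟩` with `M ∈ Λ•`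
(applications `M ⃗N` with head in `Λ•` are encoded inside the `Tm`);
and `⟨C[·], M ⃗N⟩` with `M ∈ Λ^rb`, `⃗N ∈ Λ•`. -/
inductive Rb : Type
  | atom : Tm → Rb
  | pair : Ctx → Tm → Rb
  | papp : Ctx → Rb → List Tm → Rb

namespace Rb

/-- Well-formedness: side conditions of membership in Λ^rb. -/
def WF : Rb → Prop
  | atom M => M.Pure
  | pair C M => C.Pure ∧ IsBullet M
  | papp C M Ns => C.Pure ∧ M.WF ∧ ∀ N ∈ Ns, IsBullet N

/-- Read-back on Λ^rb. -/
def rb : Rb → Tm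
  | atom M => M
  | pair C M => C.fill M.RB
  | papp C M Ns => C.fill (Tm.apps M.rb (Ns.map Tm.RB))

end Rb

/-- The reduction relation on Λ^rb (Definition 4 of the paper). -/
inductive Step : Rb → Rb → Prop
  | collapse (C M) : Step (.pair C (.atom M)) (.atom (C.fill M))
  | lam (C x M) :
      Step (.pair C (.lam x M))
        (.pair (C.comp (.lam x .hole)) (M.subst x (.atom (.var x))))
  | split (C M N₀ Ns) :
      Step (.pair C (Tm.apps (.atom M) (N₀ :: Ns)))
        (.papp C (.pair (.appR M .hole) N₀) Ns)
  | beta (C x M N₀ Ns) :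
      Step (.pair C (Tm.apps (.lam x M) (N₀ :: Ns)))
        (.pair C (Tm.apps (M.subst x N₀) Ns))
  | collapseNil (C M) : Step (.papp C (.atom M) []) (.atom (C.fill M))
  | splitCons (C M N₀ Ns) :
      Step (.papp C (.atom M) (N₀ :: Ns)) (.papp C (.pair (.appR M .hole) N₀) Ns)
  | cong (C Ns) {M M'} : Step M M' → Step (.papp C M Ns) (.papp C M' Ns)

/-- The steps of `Step` that contract a β-redex (rule 4, possibly under head congruence). -/
inductive BStep : Rb → Rb → Prop
  | beta (C x M N₀ Ns) :
      BStep (.pair C (Tm.apps (.lam x M) (N₀ :: Ns)))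
        (.pair C (Tm.apps (M.subst x N₀) Ns))
  | cong (C Ns) {M M'} : BStep M M' → BStep (.papp C M Ns) (.papp C M' Ns)

/-- Contraction of the leftmost β-redex. -/
inductive Leftmost : Tm → Tm → Prop
  | beta (x M N) : Leftmost (.app (.lam x M) N) (M.subst x N)
  | lam (x) {M M'} : Leftmost M M' → Leftmost (.lam x M) (.lam x M')
  | appL {M M'} (N) : (∀ x M₀, M ≠ Tm.lam x M₀) → Leftmost M M' →
      Leftmost (.app M N) (.app M' N)
  | appR (M) {N N'} : NF M → (∀ x M₀, M ≠ Tm.lam x M₀) → Leftmost N N' →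
      Leftmost (.app M N) (.app M N')
/-! ### Auxiliary development for the proof -/

/-- `M` is a lambda abstraction. -/
def TmIsLam : Tm → Prop
  | .lam _ _ => True
  | _ => False

lemma NF_var (x : String) : NF (Tm.var x) := fun _ h => by cases h

lemma NF_lam {x : String} {m : Tm} (h : NF m) : NF (Tm.lam x m) := by
  intro N hN
  cases hN with
  | lam _ hm => exact h _ hm

lemma NF_app {M N : Tm} (hM : NF M) (hN : NF N) (hl : ¬ TmIsLam M) :
    NF (Tm.app M N) := by
  intro P h
  cases h with
  | beta x m n => exact hl trivial
  | appL _ h => exact hM _ h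
  | appR _ h => exact hN _ h

lemma fill_comp (C D : Ctx) (M : Tm) : (C.comp D).fill M = C.fill (D.fill M) := by
  induction C <;> simp [Ctx.comp, Ctx.fill, *]

lemma NormalCtx_comp {C D : Ctx} (hC : NormalCtx C) (hD : NormalCtx D) :
    NormalCtx (C.comp D) := by
  intro M hM
  rw [fill_comp]
  exact hC _ (hD _ hM)

lemma NormalCtx_lamHole (x : String) : NormalCtx (Ctx.lam x .hole) :=
  fun _ hM => NF_lam hM

lemma NormalCtx_appR {H : Tm} (h1 : NF H) (h2 : ¬ TmIsLam H) :
    NormalCtx (Ctx.appR H .hole) :=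
  fun _ hM => NF_app h1 hM h2

/-- A context whose top constructor is an application. -/
def CtxNotLam : Ctx → Prop
  | .appL _ _ => True
  | .appR _ _ => True
  | _ => False

lemma CtxNotLam_comp {C : Ctx} (D : Ctx) (h : CtxNotLam C) :
    CtxNotLam (C.comp D) := by
  cases C <;> simp_all [CtxNotLam, Ctx.comp]

lemma notlam_fill {C : Ctx} (M : Tm) (h : CtxNotLam C) : ¬ TmIsLam (C.fill M) := by
  cases C <;> simp_all [CtxNotLam, Ctx.fill, TmIsLam]

/-- Every atom occurring in `M` wraps a β-normal non-abstraction. -/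
def AtomsGood : Tm → Prop
  | .var _ => True
  | .app a b => AtomsGood a ∧ AtomsGood b
  | .lam _ m => AtomsGood m
  | .atom p => NF p ∧ ¬ TmIsLam p

/-- Good second components of pairs: atoms are good and the term is closed. -/
def Good (M : Tm) : Prop := AtomsGood M ∧ M.FV = ∅

lemma AtomsGood_subst {M N : Tm} {x : String} (hM : AtomsGood M)
    (hN : AtomsGood N) : AtomsGood (M.subst x N) := by
  induction M with
  | var y =>
    simp only [Tm.subst]
    split
    · exact hN
    · trivial
  | app a b iha ihb => exact ⟨iha hM.1, ihb hM.2⟩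
  | lam y m ih =>
    simp only [Tm.subst]
    split
    · exact hM
    · exact ih hM
  | atom m => exact hM

lemma mem_FV_subst {M N : Tm} {x z : String} (h : z ∈ (M.subst x N).FV) :
    z ∈ N.FV ∨ (z ∈ M.FV ∧ z ≠ x) := by
  induction M with
  | var y =>
    simp only [Tm.subst] at h
    split at h
    · exact Or.inl h
    · next hyx =>
      simp only [Tm.FV, Finset.mem_singleton] at h
      subst h
      exact Or.inr ⟨Finset.mem_singleton_self _, hyx⟩
  | app a b iha ihb =>
    simp only [Tm.subst, Tm.FV, Finset.mem_union] at h ⊢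
    rcases h with h | h
    · rcases iha h with h' | ⟨h1, h2⟩
      · exact Or.inl h'
      · exact Or.inr ⟨Or.inl h1, h2⟩
    · rcases ihb h with h' | ⟨h1, h2⟩
      · exact Or.inl h'
      · exact Or.inr ⟨Or.inr h1, h2⟩
  | lam y m ih =>
    simp only [Tm.subst] at h
    split at h
    · next hyx =>
      subst hyx
      simp only [Tm.FV, Finset.mem_sdiff, Finset.mem_singleton] at h ⊢
      exact Or.inr ⟨h, h.2⟩
    · next hyx =>
      simp only [Tm.FV, Finset.mem_sdiff, Finset.mem_singleton] at h ⊢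
      rcases ih h.1 with h' | ⟨h1, h2⟩
      · exact Or.inl h'
      · exact Or.inr ⟨⟨h1, h.2⟩, h2⟩
  | atom m => simp [Tm.subst, Tm.FV] at h

lemma FV_subst_empty {M N : Tm} {x : String} (hM : M.FV ⊆ {x}) (hN : N.FV = ∅) :
    (M.subst x N).FV = ∅ := by
  apply Finset.eq_empty_of_forall_notMem
  intro z hz
  rcases mem_FV_subst hz with h | ⟨h1, h2⟩
  · rw [hN] at h
    exact absurd h (Finset.notMem_empty z)
  · exact h2 (Finset.mem_singleton.mp (hM h1))

lemma Good_app_iff {a b : Tm} : Good (Tm.app a b) ↔ Good a ∧ Good b := by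
  unfold Good
  have hag : AtomsGood (Tm.app a b) ↔ AtomsGood a ∧ AtomsGood b := Iff.rfl
  have hfv : (Tm.app a b).FV = a.FV ∪ b.FV := rfl
  rw [hag, hfv, Finset.union_eq_empty]
  tauto

lemma Good_apps_iff (L : List Tm) (M : Tm) :
    Good (Tm.apps M L) ↔ Good M ∧ ∀ N ∈ L, Good N := by
  induction L generalizing M with
  | nil => simp [Tm.apps]
  | cons N L ih =>
    rw [show Tm.apps M (N :: L) = Tm.apps (Tm.app M N) L from rfl, ih, Good_app_iff]
    simp only [List.mem_cons]
    constructor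
    · rintro ⟨⟨h1, h2⟩, h3⟩
      exact ⟨h1, fun P hP => by rcases hP with rfl | hP; exact h2; exact h3 P hP⟩
    · rintro ⟨h1, h2⟩
      exact ⟨⟨h1, h2 N (Or.inl rfl)⟩, fun P hP => h2 P (Or.inr hP)⟩

lemma AtomsGood_bulletAux {M : Tm} (bs : List String) (hM : M.Pure) :
    AtomsGood (Tm.bulletAux bs M) := by
  induction M generalizing bs with
  | var x =>
    simp only [Tm.bulletAux]
    split
    · trivial
    · exact ⟨NF_var x, fun h => h⟩
  | app a b iha ihb => exact ⟨iha bs hM.1, ihb bs hM.2⟩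
  | lam x m ih => exact ih _ hM
  | atom m => exact hM.elim

lemma mem_FV_bulletAux {M : Tm} {bs : List String} {z : String}
    (h : z ∈ (Tm.bulletAux bs M).FV) : z ∈ bs := by
  induction M generalizing bs with
  | var x =>
    simp only [Tm.bulletAux] at h
    split at h
    · simp only [Tm.FV, Finset.mem_singleton] at h
      subst h
      assumption
    · simp [Tm.FV] at h
  | app a b iha ihb =>
    simp only [Tm.bulletAux, Tm.FV, Finset.mem_union] at h
    rcases h with h | h
    · exact iha h
    · exact ihb h
  | lam x m ih =>
    simp only [Tm.bulletAux, Tm.FV, Finset.mem_sdiff, Finset.mem_singleton] at h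
    rcases List.mem_cons.mp (ih h.1) with h' | h'
    · exact absurd h' h.2
    · exact h'
  | atom m => simp [Tm.bulletAux, Tm.FV] at h

lemma Good_bullet {M : Tm} (hM : M.Pure) : Good M.bullet := by
  refine ⟨AtomsGood_bulletAux [] hM, ?_⟩
  apply Finset.eq_empty_of_forall_notMem
  intro z hz
  exact absurd (mem_FV_bulletAux hz) List.not_mem_nil

/-- The invariant preserved by `Step`.  The boolean flag records whether the
state sits in head position of an application (so that the produced atom must
not be an abstraction). -/
def RbInv : Bool → Rb → Prop
  | b, .atom M => NF M ∧ (b = true → ¬ TmIsLam M)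
  | b, .pair C M => NormalCtx C ∧ (b = true → CtxNotLam C) ∧ Good M
  | b, .papp C r Ns =>
      NormalCtx C ∧ (b = true → CtxNotLam C) ∧ RbInv true r ∧ ∀ N ∈ Ns, Good N

lemma step_inv {r r' : Rb} (h : Step r r') : ∀ b, RbInv b r → RbInv b r' := by
  induction h with
  | collapse C M =>
    intro b hI
    obtain ⟨hC, hb, hG, -⟩ := hI
    exact ⟨hC _ hG.1, fun hb' => notlam_fill _ (hb hb')⟩
  | lam C x M =>
    intro b hI
    obtain ⟨hC, hb, hGa, hGfv⟩ := hI
    refine ⟨NormalCtx_comp hC (NormalCtx_lamHole x),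
      fun hb' => CtxNotLam_comp _ (hb hb'), ?_, ?_⟩
    · exact AtomsGood_subst hGa ⟨NF_var x, fun h => h⟩
    · have : M.FV \ {x} = ∅ := hGfv
      exact FV_subst_empty (Finset.sdiff_eq_empty_iff_subset.mp this) rfl
  | split C M N₀ Ns =>
    intro b hI
    obtain ⟨hC, hb, hG⟩ := hI
    rw [Good_apps_iff] at hG
    obtain ⟨⟨⟨hNF, hNL⟩, -⟩, hNs⟩ := hG
    refine ⟨hC, hb, ⟨NormalCtx_appR hNF hNL, fun _ => trivial,
      hNs N₀ List.mem_cons_self⟩, fun N hN => hNs N (List.mem_cons_of_mem _ hN)⟩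
  | beta C x M N₀ Ns =>
    intro b hI
    obtain ⟨hC, hb, hG⟩ := hI
    rw [Good_apps_iff] at hG
    obtain ⟨⟨hGa, hGfv⟩, hNs⟩ := hG
    have hN₀ : Good N₀ := hNs N₀ List.mem_cons_self
    refine ⟨hC, hb, ?_⟩
    rw [Good_apps_iff]
    refine ⟨⟨AtomsGood_subst hGa hN₀.1, ?_⟩, fun N hN => hNs N (List.mem_cons_of_mem _ hN)⟩
    have : M.FV \ {x} = ∅ := hGfv
    exact FV_subst_empty (Finset.sdiff_eq_empty_iff_subset.mp this) hN₀.2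
  | collapseNil C M =>
    intro b hI
    obtain ⟨hC, hb, ⟨hNF, hNL⟩, -⟩ := hI
    exact ⟨hC _ hNF, fun hb' => notlam_fill _ (hb hb')⟩
  | splitCons C M N₀ Ns =>
    intro b hI
    obtain ⟨hC, hb, ⟨hNF, hNL⟩, hNs⟩ := hI
    refine ⟨hC, hb, ⟨NormalCtx_appR hNF (hNL rfl), fun _ => trivial,
      hNs N₀ List.mem_cons_self⟩, fun N hN => hNs N (List.mem_cons_of_mem _ hN)⟩
  | cong C Ns hstep ih =>
    intro b hI
    obtain ⟨hC, hb, hHead, hNs⟩ := hI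
    exact ⟨hC, hb, ih true hHead, hNs⟩

lemma rtg_inv {a b : Rb} (h : Relation.ReflTransGen Step a b) :
    RbInv false a → RbInv false b := by
  induction h with
  | refl => exact id
  | tail _ s ih => exact fun ha => step_inv s false (ih ha)

/-- If `⟨C[·], M•⟩ →* ⌈N⌉` with `C` a normal context, then `N` is β-normal. -/
theorem rb_reaches_normal (C : Ctx) (M N : Tm) (hC : NormalCtx C) (hCp : C.Pure)
    (hM : M.Pure)
    (h : Relation.ReflTransGen Step (Rb.pair C M.bullet) (Rb.atom N)) :
    NF N := by
  have h0 : RbInv false (Rb.pair C M.bullet) :=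
    ⟨hC, fun hf => absurd hf (by simp), Good_bullet hM⟩
  exact (rtg_inv h h0).1
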